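/- arXiv:2305.04178 — 2 statements merged into one kernel-verified Lean document; each statement's English description precedes it below -/
import Mathlib

section
/- Define f on partitions by: f of the empty partition is 1, f(n) = d n for a one-part partition (n), and for a partition λ = (λ₁,…,λ_r) with r ≥ 2 parts, f(λ) = f(λ \ λ_r) + ∑_{k=1}^{λ_r} C(λ_r, k) (2k-1)!! f(λ \ λ_r − k̂), where λ \ λ_r removes the last part and μ − k̂ subtracts k from every part of μ (deleting resulting zero parts). Then f(λ) ≥ 0 for every partition λ, with equality if and only if λ = (1). -/
/-- The odd double factorial `(2k-1)!! = 1 * 3 * ... * (2k-1)`, with `odf 0 = 1`. -/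
def odf (k : Nat) : Int := ∏ j ∈ Finset.Icc 1 k, (2 * (j : Int) - 1)

/-- Subtract `k` from every part, deleting parts that become zero. -/
def subHat (k : Nat) (l : List Nat) : List Nat :=
  (l.map (fun x => x - k)).filter (fun x => x ≠ 0)

/-- `l` is a partition: a non-increasing list of positive integers. -/
def IsPartition (l : List Nat) : Prop := l.Chain' (· ≥ ·) ∧ ∀ x ∈ l, 0 < x

/-- Increase the `i`-th part (1-based indexing). -/
def upAt (i : Nat) (l : List Nat) : List Nat := l.set (i - 1) (l.getD (i - 1) 0 + 1)

/-- Decrease the `j`-th part (1-based indexing), deleting it if it becomes zero. -/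
def downAt (j : Nat) (l : List Nat) : List Nat :=
  (l.set (j - 1) (l.getD (j - 1) 0 - 1)).filter (fun x => x ≠ 0)

lemma odf_pos (k : Nat) : 0 < odf k := by
  unfold odf
  apply Finset.prod_pos
  intro j hj
  simp only [Finset.mem_Icc] at hj
  have : (1:Int) ≤ (j:Int) := by exact_mod_cast hj.1
  linarith

lemma isPartition_dropLast {l : List Nat} (h : IsPartition l) : IsPartition l.dropLast :=
  ⟨h.1.prefix l.dropLast_prefix, fun x hx => h.2 x (List.dropLast_subset l hx)⟩

lemma isPartition_subHat (k : Nat) {l : List Nat} (h : IsPartition l) :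
    IsPartition (subHat k l) := by
  constructor
  · have hc := h.1
    rw [List.Chain', List.isChain_iff_pairwise] at hc ⊢
    exact (List.Pairwise.map (S := (· ≥ ·)) (fun x => x - k)
      (fun a b hab => Nat.sub_le_sub_right hab k) hc).filter _
  · intro x hx
    simp only [subHat, List.mem_filter, decide_eq_true_eq] at hx
    omega

lemma filter_sum_le (p : Nat → Bool) (l : List Nat) : (l.filter p).sum ≤ l.sum := by
  induction l with
  | nil => simp
  | cons a t ih =>
    rw [List.filter_cons]
    by_cases h : p a
    · simp only [h, if_true, List.sum_cons]; omega
    · rw [if_neg (by simp [h])]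
      simp only [List.sum_cons]; omega

lemma map_sub_sum_le (k : Nat) (l : List Nat) : (l.map (fun x => x - k)).sum ≤ l.sum := by
  induction l with
  | nil => simp
  | cons a t ih => simp only [List.map_cons, List.sum_cons]; omega

lemma subHat_sum_le (k : Nat) (l : List Nat) : (subHat k l).sum ≤ l.sum :=
  le_trans (filter_sum_le _ _) (map_sub_sum_le k l)

lemma sum_eq_dropLast (l : List Nat) (h : l ≠ []) :
    l.sum = l.dropLast.sum + l.getLastD 0 := by
  conv_lhs => rw [← List.dropLast_append_getLast h]
  rw [List.sum_append]
  simp [List.getLastD_eq_getLast?, List.getLast?_eq_getLast h]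

theorem stmt2
    (d : Nat → Int) (hd0 : d 0 = 1) (hd1 : d 1 = 0)
    (hd : ∀ n : Nat, 2 ≤ n → d n = 2 * ((n : Int) - 1) * (d (n - 1) + d (n - 2)))
    (f : List Nat → Int) (hf0 : f [] = 1) (hf1 : ∀ m : Nat, f [m] = d m)
    (hfr : ∀ l : List Nat, IsPartition l → 2 ≤ l.length →
      f l = f l.dropLast + ∑ k ∈ Finset.Icc 1 (l.getLastD 0),
        ((l.getLastD 0).choose k : Int) * odf k * f (subHat k l.dropLast)) :
    ∀ l : List Nat, IsPartition l → 0 ≤ f l ∧ (f l = 0 ↔ l = [1]) := by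
  -- positivity facts about d
  have dnn : ∀ m : Nat, 0 ≤ d m ∧ (m ≠ 1 → 0 < d m) := by
    intro m
    induction m using Nat.strong_induction_on with
    | _ m ih =>
      match m with
      | 0 => simp [hd0]
      | 1 => simp [hd1]
      | 2 =>
        have he := hd 2 (by norm_num)
        norm_num at he
        rw [hd1, hd0] at he
        rw [he]; norm_num
      | (m+3) =>
        have h1 := (ih (m+2) (by omega)).2 (by omega)
        have h2 := (ih (m+1) (by omega)).1
        have he := hd (m+3) (by omega)
        have e1 : m + 3 - 1 = m + 2 := rfl
        have e2 : m + 3 - 2 = m + 1 := rfl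
        rw [e1, e2] at he
        have hm : (0:Int) ≤ (m:Int) := Int.natCast_nonneg m
        have hpos : 0 < d (m+3) := by
          rw [he]; push_cast; nlinarith
        exact ⟨hpos.le, fun _ => hpos⟩
  have key : ∀ n : Nat, ∀ l : List Nat, l.sum = n → IsPartition l →
      0 ≤ f l ∧ (f l = 0 ↔ l = [1]) := by
    intro n
    induction n using Nat.strong_induction_on with
    | _ n ih =>
      intro l hsum hl
      match l with
      | [] =>
        rw [hf0]
        refine ⟨by norm_num, ?_, ?_⟩
        · intro h; norm_num at h
        · intro h; simp at h
      | [m] =>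
        rw [hf1]
        refine ⟨(dnn m).1, ?_, ?_⟩
        · intro h0
          by_contra hne
          have hm1 : m ≠ 1 := by simpa using hne
          have := (dnn m).2 hm1
          omega
        · intro h
          have : m = 1 := by simpa using h
          rw [this, hd1]
      | a :: b :: t =>
        have hlen : 2 ≤ (a :: b :: t).length := by simp
        have hrec := hfr (a :: b :: t) hl hlen
        have hL' : IsPartition (a :: b :: t).dropLast := isPartition_dropLast hl
        have hne : (a :: b :: t) ≠ [] := by simp
        have hlastmem := List.getLast_mem hne
        have hlast_pos : 0 < (a :: b :: t).getLast hne := hl.2 _ hlastmem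
        have hgd : (a :: b :: t).getLastD 0 = (a :: b :: t).getLast hne := by
          simp [List.getLastD_eq_getLast?, List.getLast?_eq_getLast hne]
        have hsplit := sum_eq_dropLast (a :: b :: t) hne
        have hdls : (a :: b :: t).dropLast.sum < n := by
          rw [hsum] at hsplit; omega
        have hSnn : 0 ≤ ∑ k ∈ Finset.Icc 1 ((a :: b :: t).getLastD 0),
            (((a :: b :: t).getLastD 0).choose k : Int) * odf k *
              f (subHat k (a :: b :: t).dropLast) := by
          apply Finset.sum_nonneg
          intro k hk
          have h1 : (0:Int) ≤ (((a :: b :: t).getLastD 0).choose k : Int) :=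
            Int.natCast_nonneg _
          have h3 : 0 ≤ f (subHat k (a :: b :: t).dropLast) := by
            have hp := isPartition_subHat k hL'
            have hs : (subHat k (a :: b :: t).dropLast).sum < n :=
              lt_of_le_of_lt (subHat_sum_le k _) hdls
            exact (ih _ hs _ rfl hp).1
          exact mul_nonneg (mul_nonneg h1 (odf_pos k).le) h3
        by_cases hcase : (a :: b :: t).dropLast = [1]
        · -- then l = [1,1]
          have ht : t = [] := by
            have hlen2 := congrArg List.length hcase
            simp at hlen2
            exact hlen2
          subst ht
          have ha : a = 1 := by simpa using hcase
          subst ha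
          have hb : b = 1 := by
            have hchain := hl.1
            have hge : 1 ≥ b := by
              simpa using List.isChain_cons_cons.mp hchain |>.1
            have hbpos : 0 < b := hl.2 b (by simp)
            omega
          subst hb
          have hsub : subHat 1 [1] = [] := rfl
          have hodf1 : odf 1 = 1 := by simp [odf]
          rw [hcase] at hrec
          simp only [show ([1,1] : List Nat).getLastD 0 = 1 from rfl,
            Finset.Icc_self, Finset.sum_singleton, hsub, hodf1, hf1, hf0, hd1] at hrec
          norm_num at hrec
          rw [hrec]
          refine ⟨by norm_num, by norm_num, by intro h; simp at h⟩
        · have hfl' : 0 < f (a :: b :: t).dropLast := by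
            obtain ⟨hnn, hiff⟩ := ih _ hdls _ rfl hL'
            rcases lt_or_eq_of_le hnn with h | h
            · exact h
            · exact absurd (hiff.mp h.symm) hcase
          have hpos : 0 < f (a :: b :: t) := by rw [hrec]; linarith
          refine ⟨hpos.le, ?_, ?_⟩
          · intro h; exact absurd h hpos.ne'
          · intro h; simp at h
  intro l hl
  exact key l.sum l rfl hl
end

section
/- With f as defined by the recurrence f(λ) = f(λ \ λ_r) + ∑_{k=1}^{λ_r} C(λ_r,k)(2k-1)!! f(λ \ λ_r − k̂) (with f of the empty partition equal to 1 and f(n) = d n), for any partition μ = (μ₁,…,μ_s) with s ≥ 2 parts, the identity ∑_{k=1}^{μ_s} C(μ_s, k) (2k+1)!! f(μ \ μ_s − k̂) = (2μ_s + 1) f(μ) − 2μ_s f(μ↓_s) − f(μ \ μ_s) holds, where μ↓_s is μ with its last part decreased by 1 (removed if it becomes 0). -/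
lemma odf_succ (k : Nat) : odf (k + 1) = (2 * (k : Int) + 1) * odf k := by
  unfold odf
  rw [Finset.prod_Icc_succ_top (by omega)]
  push_cast; ring

lemma choose_aux (m k : Nat) (hk : 1 ≤ k) (hkm : k ≤ m) :
    ((m : Int) - k) * (m.choose k : Int) = m * ((m - 1).choose k : Int) := by
  obtain ⟨m', rfl⟩ : ∃ m', m = m' + 1 := ⟨m - 1, by omega⟩
  obtain ⟨k', rfl⟩ : ∃ k', k = k' + 1 := ⟨k - 1, by omega⟩
  have h2 : ((m' + 1).choose (k' + 1) : Int)
      = (m'.choose k' : Int) + (m'.choose (k' + 1) : Int) := by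
    exact_mod_cast congrArg (Nat.cast (R := Int)) (Nat.choose_succ_succ m' k')
  have h1 : ((m' : Int) + 1) * (m'.choose k' : Int)
      = ((m' + 1).choose (k' + 1) : Int) * ((k' : Int) + 1) := by
    exact_mod_cast congrArg (Nat.cast (R := Int)) (Nat.add_one_mul_choose_eq m' k')
  push_cast at *
  linear_combination ((m' : Int) + 1) * h2 + h1

lemma downAt_concat (ν : List Nat) (m : Nat) (hν : ∀ x ∈ ν, 0 < x) :
    downAt (ν ++ [m]).length (ν ++ [m]) = ν ++ (if m - 1 = 0 then [] else [m - 1]) := by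
  simp only [downAt, List.length_append, List.length_singleton, Nat.add_sub_cancel]
  rw [show (ν ++ [m]).getD ν.length 0 = m by simp]
  rw [show (ν ++ [m]).set ν.length (m - 1) = ν ++ [m - 1] by simp [List.set_append]]
  rw [List.filter_append]
  congr 1
  · rw [List.filter_eq_self]; intro a ha; simpa using (hν a ha).ne'
  · split <;> simp_all

lemma partition_concat_pred (ν : List Nat) (m : Nat) (hm : 2 ≤ m)
    (hp : IsPartition (ν ++ [m])) : IsPartition (ν ++ [m - 1]) := by
  obtain ⟨hc, hpos⟩ := hp
  simp only [List.Chain', List.isChain_append] at hc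
  constructor
  · simp only [List.Chain', List.isChain_append]
    refine ⟨hc.1, by simp, ?_⟩
    intro x hx y hy
    have := hc.2.2 x hx m (by simp)
    simp at hy; omega
  · intro x hx
    simp at hx
    rcases hx with hx | hx
    · exact hpos x (by simp [hx])
    · omega

theorem stmt3
    (d : Nat → Int) (hd0 : d 0 = 1) (hd1 : d 1 = 0)
    (hd : ∀ n : Nat, 2 ≤ n → d n = 2 * ((n : Int) - 1) * (d (n - 1) + d (n - 2)))
    (f : List Nat → Int) (hf0 : f [] = 1) (hf1 : ∀ m : Nat, f [m] = d m)
    (hfr : ∀ l : List Nat, IsPartition l → 2 ≤ l.length →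
      f l = f l.dropLast + ∑ k ∈ Finset.Icc 1 (l.getLastD 0),
        ((l.getLastD 0).choose k : Int) * odf k * f (subHat k l.dropLast))
    (μ : List Nat) (hμ : IsPartition μ) (hs : 2 ≤ μ.length) :
    ∑ k ∈ Finset.Icc 1 (μ.getLastD 0),
        ((μ.getLastD 0).choose k : Int) * odf (k + 1) * f (subHat k μ.dropLast)
      = (2 * (μ.getLastD 0 : Int) + 1) * f μ - 2 * (μ.getLastD 0 : Int) * f (downAt μ.length μ)
        - f μ.dropLast := by
  have hne : μ ≠ [] := by rintro rfl; simp at hs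
  obtain ⟨ν, m, heq, hν⟩ : ∃ ν m, μ = ν ++ [m] ∧ ν ≠ [] := by
    refine ⟨μ.dropLast, μ.getLast hne, (List.dropLast_append_getLast hne).symm, ?_⟩
    intro h
    have := congrArg List.length h
    simp [List.length_dropLast] at this
    omega
  subst heq
  simp only [List.dropLast_concat, List.getLastD_concat]
  have hνpos : ∀ x ∈ ν, 0 < x := fun x hx => hμ.2 x (by simp [hx])
  have hmpos : 0 < m := hμ.2 m (by simp)
  have hlen : 2 ≤ (ν ++ [m]).length := hs
  -- expand f (ν ++ [m])
  have hfμ := hfr (ν ++ [m]) hμ hlen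
  simp only [List.dropLast_concat, List.getLastD_concat] at hfμ
  have hdown := downAt_concat ν m hνpos
  obtain ⟨n, rfl⟩ : ∃ n, m = n + 1 := ⟨m - 1, by omega⟩
  simp only [Nat.add_sub_cancel] at hdown
  rcases Nat.eq_zero_or_pos n with rfl | hn
  · -- m = 1
    simp only [if_pos rfl, List.append_nil] at hdown
    rw [hdown, hfμ]
    simp only [Finset.Icc_self, Finset.sum_singleton]
    have h1 : odf 1 = 1 := by rw [show (1:ℕ) = 0 + 1 from rfl, odf_succ]; simp [odf]
    have h2 : odf 2 = 3 := by rw [show (2:ℕ) = 1 + 1 from rfl, odf_succ, h1]; norm_num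
    simp [h1, h2]
    ring
  · -- m = n + 1, n ≥ 1
    rw [if_neg (by omega)] at hdown
    rw [hdown]
    have hp' : IsPartition (ν ++ [n]) := by
      have := partition_concat_pred ν (n + 1) (by omega) hμ
      simpa using this
    have hfd := hfr (ν ++ [n]) hp' (by simpa using hlen)
    simp only [List.dropLast_concat, List.getLastD_concat] at hfd
    have hS2 : ∑ k ∈ Finset.Icc 1 n, (n.choose k : Int) * odf k * f (subHat k ν)
        = ∑ k ∈ Finset.Icc 1 (n + 1), (n.choose k : Int) * odf k * f (subHat k ν) := by
      rw [Finset.sum_Icc_succ_top (by omega)]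
      simp [Nat.choose_eq_zero_of_lt (by omega : n < n + 1)]
    rw [hS2] at hfd
    have key : ∀ k ∈ Finset.Icc 1 (n + 1),
        (((n + 1).choose k : Int)) * odf (k + 1) * f (subHat k ν)
        = (2 * ((n : Int) + 1) + 1) * ((((n + 1).choose k : Int)) * odf k * f (subHat k ν))
          - 2 * ((n : Int) + 1) * ((n.choose k : Int) * odf k * f (subHat k ν)) := by
      intro k hk
      simp only [Finset.mem_Icc] at hk
      have hch := choose_aux (n + 1) k hk.1 hk.2
      simp only [Nat.add_sub_cancel] at hch
      push_cast at hch ⊢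
      rw [odf_succ]
      linear_combination (-2 * odf k * f (subHat k ν)) * hch
    rw [Finset.sum_congr rfl key, Finset.sum_sub_distrib, ← Finset.mul_sum, ← Finset.mul_sum]
    push_cast
    rw [hfμ, hfd]
    ring
end
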